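/- If G is a connected graph of order n ≥ 2 and H is a family of n δ-regular graphs each of girth at least 5, then the corona product G⊙H is 2δ-metric dimensional. -/

import Mathlib

open SimpleGraph

/-- `S` is a `k`-metric generator for `G`: every pair of distinct vertices is
distinguished (has different distances) by at least `k` vertices of `S`. -/
def kMetricGen {V : Type*} [Fintype V] (G : SimpleGraph V) (k : ℕ) (S : Set V) : Prop :=
  ∀ u v : V, u ≠ v → ∃ T : Finset V, ↑T ⊆ S ∧ k ≤ T.card ∧ ∀ w ∈ T, G.dist u w ≠ G.dist v w

/-- `G` is `k`-metric dimensional: `k` is the largest integer admitting a `k`-metric generator. -/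
def kMetricDimensional {V : Type*} [Fintype V] (G : SimpleGraph V) (k : ℕ) : Prop :=
  (∃ S : Set V, kMetricGen G k S) ∧ ∀ k' : ℕ, (∃ S : Set V, kMetricGen G k' S) → k' ≤ k

/-- The `k`-metric dimension of `G`. -/
noncomputable def kMetricDim {V : Type*} [Fintype V] (G : SimpleGraph V) (k : ℕ) : ℕ :=
  sInf {m | ∃ S : Finset V, kMetricGen G k ↑S ∧ S.card = m}

/-- A `k`-metric basis: a minimum-cardinality `k`-metric generator. -/
def kMetricBasis {V : Type*} [Fintype V] (G : SimpleGraph V) (k : ℕ) (B : Finset V) : Prop :=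
  kMetricGen G k ↑B ∧ ∀ T : Finset V, kMetricGen G k ↑T → B.card ≤ T.card

/-- Auxiliary relation for the corona product. -/
def coronaRel {V : Type*} {W : V → Type*} (G : SimpleGraph V) (H : ∀ v, SimpleGraph (W v)) :
    (V ⊕ (Σ v, W v)) → (V ⊕ (Σ v, W v)) → Prop
  | Sum.inl a, Sum.inl b => G.Adj a b
  | Sum.inl a, Sum.inr b => a = b.1
  | Sum.inr a, Sum.inr b => ∃ h : a.1 = b.1, (H b.1).Adj (h ▸ a.2) b.2
  | _, _ => False

/-- The corona product `G ⊙ 𝓗`: one copy of `G`, and each vertex `v` of `G` joined by an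
edge to every vertex of its own copy of `H v`. -/
def corona {V : Type*} {W : V → Type*} (G : SimpleGraph V) (H : ∀ v, SimpleGraph (W v)) :
    SimpleGraph (V ⊕ (Σ v, W v)) :=
  SimpleGraph.fromRel (coronaRel G H)

/-- The join `K₁ + H`: a new vertex (`none`) adjacent to every vertex of `H`. -/
def K1join {U : Type*} (H : SimpleGraph U) : SimpleGraph (Option U) :=
  SimpleGraph.fromRel (fun x y => match x, y with
    | none, some _ => True
    | some a, some b => H.Adj a b
    | _, _ => False)

/-- `𝒞(H) = min_{x ≠ y} |(N(x) △ N(y)) ∪ {x,y}|`. -/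
noncomputable def CC {U : Type*} (H : SimpleGraph U) : ℕ :=
  sInf {m | ∃ x y : U, x ≠ y ∧
    (symmDiff (H.neighborSet x) (H.neighborSet y) ∪ {x, y}).ncard = m}


section GirthAux
variable {U : Type*} {K : SimpleGraph U}

lemma cycle_length_lb (h5 : 5 ≤ K.girth) {a : U} {w : K.Walk a a}
    (hw : w.IsCycle) : 5 ≤ w.length := by
  have hac : ¬K.IsAcyclic := by
    intro h
    rw [girth_eq_zero.mpr h] at h5
    omega
  have htop : K.egirth ≠ ⊤ := fun h => hac (egirth_eq_top.mp h)
  have h5' : (5 : ℕ∞) ≤ K.egirth := by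
    have := ENat.coe_toNat htop
    calc (5 : ℕ∞) ≤ (K.girth : ℕ∞) := by exact_mod_cast h5
      _ = K.egirth := this
  have := le_egirth.mp h5' a w hw
  exact_mod_cast this

lemma edge_of_girth (h5 : 5 ≤ K.girth) : ∃ x y : U, K.Adj x y := by
  have hac : ¬K.IsAcyclic := by
    intro h
    rw [girth_eq_zero.mpr h] at h5
    omega
  obtain ⟨a, w, hw, -⟩ := exists_girth_eq_length.mpr hac
  cases w with
  | nil => exact absurd rfl hw.ne_nil
  | cons h q => exact ⟨_, _, h⟩

lemma trifree (h5 : 5 ≤ K.girth) {x y z : U}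
    (hxy : K.Adj x y) (hyz : K.Adj y z) (hxz : K.Adj x z) : False := by
  have hc : (Walk.cons hxy (Walk.cons hyz (Walk.cons hxz.symm Walk.nil))).IsCycle := by
    simp [Walk.isCycle_def, Walk.isTrail_def, hxy.ne, hyz.ne, hxz.ne, hxy.ne',
      hyz.ne', hxz.ne', Sym2.eq_iff]
  have := cycle_length_lb h5 hc
  simp at this

lemma quadfree (h5 : 5 ≤ K.girth) {x y z z' : U} (hzz' : z ≠ z') (hxy : x ≠ y)
    (hxz : K.Adj x z) (hzy : K.Adj z y) (hyz' : K.Adj y z') (hz'x : K.Adj z' x) :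
    False := by
  have hc : (Walk.cons hxz (Walk.cons hzy (Walk.cons hyz'
      (Walk.cons hz'x Walk.nil)))).IsCycle := by
    simp [Walk.isCycle_def, Walk.isTrail_def, Sym2.eq_iff, hzz', hxy, hxy.symm,
      hzz'.symm, hxz.ne, hxz.ne', hzy.ne, hzy.ne', hyz'.ne, hyz'.ne', hz'x.ne, hz'x.ne']
  have := cycle_length_lb h5 hc
  simp at this

section counting
variable [Fintype U] [DecidableEq U] [DecidableRel K.Adj] {δ : ℕ}

lemma card_nf (hreg : K.IsRegularOfDegree δ) (x : U) : (K.neighborFinset x).card = δ :=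
  hreg x

lemma disj_nf (h5 : 5 ≤ K.girth) {x y : U} (hxy : K.Adj x y) :
    Disjoint (K.neighborFinset x) (K.neighborFinset y) := by
  rw [Finset.disjoint_left]
  intro z hz1 hz2
  rw [mem_neighborFinset] at hz1 hz2
  exact trifree h5 hxy hz2 hz1

lemma two_delta_le_card (h5 : 5 ≤ K.girth) (hreg : K.IsRegularOfDegree δ) :
    2 * δ ≤ Fintype.card U := by
  obtain ⟨x, y, hxy⟩ := edge_of_girth h5
  have := Finset.card_union_of_disjoint (disj_nf h5 hxy)
  have hle := Finset.card_le_univ (K.neighborFinset x ∪ K.neighborFinset y)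
  rw [this, card_nf hreg, card_nf hreg] at hle
  simpa [two_mul, Finset.card_univ] using hle

lemma inter_card_le_one (h5 : 5 ≤ K.girth) {x y : U} (hxy : x ≠ y)
    (hnadj : ¬K.Adj x y) : (K.neighborFinset x ∩ K.neighborFinset y).card ≤ 1 := by
  by_contra hc
  obtain ⟨z, hz, z', hz', hne⟩ := Finset.one_lt_card.mp (Nat.lt_of_not_le hc)
  simp only [Finset.mem_inter, mem_neighborFinset] at hz hz'
  exact quadfree h5 hne hxy hz.1 hz.2.symm hz'.2 hz'.1.symm

lemma card_core (h5 : 5 ≤ K.girth) (hreg : K.IsRegularOfDegree δ) {x y : U}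
    (hxy : x ≠ y) :
    2 * δ ≤ ((symmDiff (K.neighborFinset x) (K.neighborFinset y)) ∪ {x, y}).card := by
  by_cases hadj : K.Adj x y
  · have hd := disj_nf h5 hadj
    have hsym : symmDiff (K.neighborFinset x) (K.neighborFinset y)
        = K.neighborFinset x ∪ K.neighborFinset y := by
      rw [hd.symmDiff_eq_sup]; rfl
    calc 2 * δ = (K.neighborFinset x ∪ K.neighborFinset y).card := by
          rw [Finset.card_union_of_disjoint hd, card_nf hreg, card_nf hreg]; ring
      _ ≤ _ := Finset.card_le_card (by rw [hsym]; exact Finset.subset_union_left)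
  · have hc1 : (K.neighborFinset x ∩ K.neighborFinset y).card ≤ 1 :=
      inter_card_le_one h5 hxy hadj
    have hcx : (K.neighborFinset x \ K.neighborFinset y).card
        + (K.neighborFinset x ∩ K.neighborFinset y).card = δ := by
      rw [Finset.card_sdiff_add_card_inter, card_nf hreg]
    have hcy : (K.neighborFinset y \ K.neighborFinset x).card
        + (K.neighborFinset y ∩ K.neighborFinset x).card = δ := by
      rw [Finset.card_sdiff_add_card_inter, card_nf hreg]
    have hinterc : (K.neighborFinset y ∩ K.neighborFinset x).card
        = (K.neighborFinset x ∩ K.neighborFinset y).card := by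
      rw [Finset.inter_comm]
    have hsymcard : (symmDiff (K.neighborFinset x) (K.neighborFinset y)).card
        = (K.neighborFinset x \ K.neighborFinset y).card
          + (K.neighborFinset y \ K.neighborFinset x).card := by
      rw [symmDiff_def]
      exact Finset.card_union_of_disjoint disjoint_sdiff_sdiff
    have hxmem : x ∉ symmDiff (K.neighborFinset x) (K.neighborFinset y) := by
      rw [symmDiff_def]
      simp only [Finset.sup_eq_union, Finset.mem_union, Finset.mem_sdiff,
        mem_neighborFinset]
      push_neg
      constructor
      · intro h; exact absurd h (K.irrefl)
      · intro h; exact absurd h.symm hadj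
    have hymem : y ∉ symmDiff (K.neighborFinset x) (K.neighborFinset y) := by
      rw [symmDiff_def]
      simp only [Finset.sup_eq_union, Finset.mem_union, Finset.mem_sdiff,
        mem_neighborFinset]
      push_neg
      constructor
      · intro h; exact absurd h hadj
      · intro h; exact absurd h (K.irrefl)
    have hdisj : Disjoint (symmDiff (K.neighborFinset x) (K.neighborFinset y))
        ({x, y} : Finset U) := by
      rw [Finset.disjoint_right]
      intro z hz
      simp only [Finset.mem_insert, Finset.mem_singleton] at hz
      rcases hz with rfl | rfl
      · exact hxmem
      · exact hymem
    have hpair : ({x, y} : Finset U).card = 2 := Finset.card_pair hxy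
    rw [Finset.card_union_of_disjoint hdisj, hpair, hsymcard]
    omega
end counting

end GirthAux

section CoronaAux
open Sum
variable {V : Type*} {W : V → Type*} {G : SimpleGraph V} {H : ∀ v, SimpleGraph (W v)}

lemma corona_adj_inl_inl {a b : V} :
    (corona G H).Adj (inl a) (inl b) ↔ G.Adj a b := by
  constructor
  · rintro ⟨hne, h | h⟩
    · exact h
    · exact h.symm
  · intro h
    exact ⟨by simpa using h.ne, Or.inl h⟩

lemma corona_adj_inl_inr {a : V} {b : Σ v, W v} :
    (corona G H).Adj (inl a) (inr b) ↔ a = b.1 := by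
  constructor
  · rintro ⟨hne, h | h⟩
    · exact h
    · exact h.elim
  · intro h
    exact ⟨by simp, Or.inl h⟩

lemma corona_adj_inr_inr_same {i : V} {x y : W i} :
    (corona G H).Adj (inr ⟨i, x⟩) (inr ⟨i, y⟩) ↔ (H i).Adj x y := by
  constructor
  · rintro ⟨hne, ⟨h, hadj⟩ | ⟨h, hadj⟩⟩
    · exact hadj
    · exact hadj.symm
  · intro h
    refine ⟨by simpa using h.ne, Or.inl ⟨rfl, h⟩⟩

lemma corona_not_adj_inr_inr {i j : V} {x : W i} {y : W j} (hij : i ≠ j) :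
    ¬ (corona G H).Adj (inr ⟨i, x⟩) (inr ⟨j, y⟩) := by
  rintro ⟨hne, ⟨h, _⟩ | ⟨h, _⟩⟩
  · exact hij h
  · exact hij h.symm

lemma corona_fst_eq_of_adj {a b : Σ v, W v} (h : (corona G H).Adj (inr a) (inr b)) :
    a.1 = b.1 := by
  rcases h with ⟨hne, ⟨h, _⟩ | ⟨h, _⟩⟩
  · exact h
  · exact h.symm

/-- projection to the base graph -/
def cproj : (V ⊕ (Σ v, W v)) → V := Sum.elim id Sigma.fst

open Classical in
/-- penalty counting necessary "vertical" steps -/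
noncomputable def cpen : (V ⊕ (Σ v, W v)) → (V ⊕ (Σ v, W v)) → ℕ
  | inl _, inl _ => 0
  | inl _, inr _ => 1
  | inr _, inl _ => 1
  | inr a, inr b => if a.1 = b.1 then 0 else 2

lemma cpen_self (u : V ⊕ (Σ v, W v)) : cpen u u = 0 := by
  rcases u with a | a <;> simp [cpen]

lemma corona_walk_lb (hG : G.Connected) {s t : V ⊕ (Σ v, W v)}
    (p : (corona G H).Walk s t) :
    G.dist (cproj s) (cproj t) + cpen s t ≤ p.length := by
  induction p with
  | nil => simp [cpen_self]
  | @cons s w t h p ih =>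
      have tri : G.dist (cproj s) (cproj t) ≤
          G.dist (cproj s) (cproj w) + G.dist (cproj w) (cproj t) :=
        hG.dist_triangle
      have step : G.dist (cproj s) (cproj w) + cpen s t ≤ cpen w t + 1 := by
        rcases s with a | a <;> rcases w with b | b
        · have hd : G.dist a b = 1 := dist_eq_one_iff_adj.mpr (corona_adj_inl_inl.mp h)
          rcases t with c | c <;> simp [cproj, cpen, hd]
        · have hab : a = b.1 := corona_adj_inl_inr.mp h
          subst hab
          rcases t with c | c
          · simp [cproj, cpen, SimpleGraph.dist_self]
          · by_cases hbc : b.1 = c.1 <;>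
              simp [cproj, cpen, hbc, SimpleGraph.dist_self]
        · have hab : b = a.1 := corona_adj_inl_inr.mp h.symm
          subst hab
          rcases t with c | c
          · simp [cproj, cpen, SimpleGraph.dist_self]
          · by_cases hac : a.1 = c.1 <;>
              simp [cproj, cpen, hac, SimpleGraph.dist_self]
        · have hab : a.1 = b.1 := corona_fst_eq_of_adj h
          have hd : G.dist a.1 b.1 = 0 := by rw [hab]; exact dist_self
          rcases t with c | c
          · simp [cproj, cpen, hd]
          · by_cases hbc : b.1 = c.1 <;>
              simp [cproj, cpen, hd, hab, hbc, SimpleGraph.dist_self]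
      simp only [Walk.length_cons]
      omega

/-- the embedding of `G` into the corona -/
def cinl : G →g corona G H := ⟨inl, fun h => corona_adj_inl_inl.mpr h⟩

lemma corona_adj_inr_inl {b : Σ v, W v} : (corona G H).Adj (inr b) (inl b.1) :=
  (corona_adj_inl_inr.mpr rfl).symm

lemma corona_reachable (hG : G.Connected) (u v : V ⊕ (Σ v, W v)) :
    (corona G H).Reachable u v := by
  have base : ∀ a b : V, (corona G H).Reachable (inl a) (inl b) := fun a b =>
    (hG.preconnected a b).map (cinl (H := H))
  have toinl : ∀ u : V ⊕ (Σ v, W v), (corona G H).Reachable u (inl (cproj u)) := by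
    rintro (a | a)
    · exact Reachable.refl _
    · exact (corona_adj_inr_inl).reachable
  exact (toinl u).trans ((base _ _).trans (toinl v).symm)

lemma corona_dist_inl_inl (hG : G.Connected) (a b : V) :
    (corona G H).dist (inl a) (inl b) = G.dist a b := by
  apply le_antisymm
  · obtain ⟨p, hp⟩ := (hG.preconnected a b).exists_walk_length_eq_dist
    calc (corona G H).dist (inl a) (inl b) ≤ (p.map (cinl (H := H))).length :=
          dist_le _
      _ = G.dist a b := by rw [Walk.length_map, hp]
  · obtain ⟨q, hq⟩ := (corona_reachable (H := H) hG (inl a) (inl b)).exists_walk_length_eq_dist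
    have := corona_walk_lb hG q
    simp only [cproj, Sum.elim_inl, id_eq, cpen] at this
    omega

lemma corona_dist_inl_inr (hG : G.Connected) (a : V) (b : Σ v, W v) :
    (corona G H).dist (inl a) (inr b) = G.dist a b.1 + 1 := by
  apply le_antisymm
  · obtain ⟨p, hp⟩ := (hG.preconnected a b.1).exists_walk_length_eq_dist
    calc (corona G H).dist (inl a) (inr b)
        ≤ ((p.map (cinl (H := H))).concat corona_adj_inr_inl.symm).length := dist_le _
      _ = G.dist a b.1 + 1 := by
          have h1 := Walk.length_concat (p.map (cinl (H := H))) (corona_adj_inr_inl (b := b)).symm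
          rw [Walk.length_map, hp] at h1
          omega
  · obtain ⟨q, hq⟩ := (corona_reachable (H := H) hG (inl a) (inr b)).exists_walk_length_eq_dist
    have := corona_walk_lb hG q
    simp only [cproj, Sum.elim_inl, Sum.elim_inr, id_eq, cpen] at this
    omega

lemma corona_dist_inr_inr (hG : G.Connected) (b c : Σ v, W v) (hbc : b.1 ≠ c.1) :
    (corona G H).dist (inr b) (inr c) = G.dist b.1 c.1 + 2 := by
  apply le_antisymm
  · obtain ⟨p, hp⟩ := (hG.preconnected b.1 c.1).exists_walk_length_eq_dist
    calc (corona G H).dist (inr b) (inr c)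
        ≤ (Walk.cons corona_adj_inr_inl
            ((p.map (cinl (H := H))).concat corona_adj_inr_inl.symm)).length := dist_le _
      _ = G.dist b.1 c.1 + 2 := by
          refine (Walk.length_cons _ _).trans ?_
          refine (congrArg (· + 1) ((Walk.length_concat _ _).trans
            (congrArg (· + 1) ((Walk.length_map _ _).trans hp)))).trans ?_
          show G.dist b.1 c.1 + 1 + 1 = G.dist b.1 c.1 + 2
          omega
  · obtain ⟨q, hq⟩ := (corona_reachable (H := H) hG (inr b) (inr c)).exists_walk_length_eq_dist
    have := corona_walk_lb hG q
    simp only [cproj, Sum.elim_inr, cpen, if_neg hbc] at this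
    omega

lemma corona_dist_inr_inr_adj {i : V} {x z : W i} (h : (H i).Adj x z) :
    (corona G H).dist (inr ⟨i, x⟩) (inr ⟨i, z⟩) = 1 :=
  dist_eq_one_iff_adj.mpr (corona_adj_inr_inr_same.mpr h)

lemma corona_dist_inr_inr_nonadj (hG : G.Connected) {i : V} {x z : W i}
    (hxz : x ≠ z) (h : ¬ (H i).Adj x z) :
    (corona G H).dist (inr ⟨i, x⟩) (inr ⟨i, z⟩) = 2 := by
  have hne : (inr ⟨i, x⟩ : V ⊕ (Σ v, W v)) ≠ inr ⟨i, z⟩ := by simp [hxz]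
  have h0 : 0 < (corona G H).dist (inr ⟨i, x⟩) (inr ⟨i, z⟩) :=
    (corona_reachable hG _ _).pos_dist_of_ne hne
  have h1 : (corona G H).dist (inr ⟨i, x⟩) (inr ⟨i, z⟩) ≠ 1 := by
    intro h1
    exact h (corona_adj_inr_inr_same.mp (dist_eq_one_iff_adj.mp h1))
  have h2 : (corona G H).dist (inr ⟨i, x⟩) (inr ⟨i, z⟩) ≤ 2 := by
    have e1 : (corona G H).Adj (inr ⟨i, x⟩) (inl i) := corona_adj_inr_inl (b := ⟨i, x⟩)
    have e2 : (corona G H).Adj (inl i) (inr ⟨i, z⟩) :=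
      corona_adj_inl_inr (a := i) (b := ⟨i, z⟩) |>.mpr rfl
    have := dist_le (Walk.cons e1 (Walk.cons e2 Walk.nil))
    simpa using this
  omega

/-- the finset of all vertices of the `k`-th copy inside the corona -/
def Tcopy (k : V) [Fintype (W k)] : Finset (V ⊕ (Σ v, W v)) :=
  Finset.univ.map ⟨fun z : W k => inr ⟨k, z⟩, fun a b h => by simpa using h⟩

lemma mem_Tcopy {k : V} [Fintype (W k)] {w : V ⊕ (Σ v, W v)} :
    w ∈ Tcopy k ↔ ∃ z : W k, inr ⟨k, z⟩ = w := by
  simp [Tcopy]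
  exact Iff.rfl

lemma card_Tcopy {k : V} [Fintype (W k)] :
    (Tcopy (W := W) k).card = Fintype.card (W k) := by
  simp [Tcopy]

lemma same_fiber_dist_le_two (hG : G.Connected) {i : V} (x z : W i) :
    (corona G H).dist (inr ⟨i, x⟩) (inr ⟨i, z⟩) ≤ 2 := by
  by_cases hxz : x = z
  · subst hxz
    rw [SimpleGraph.dist_self]
    omega
  by_cases hadj : (H i).Adj x z
  · rw [corona_dist_inr_inr_adj hadj]; omega
  · rw [corona_dist_inr_inr_nonadj hG hxz hadj]

lemma corona_gen [Fintype V] [∀ v, Fintype (W v)] [∀ v, DecidableRel (H v).Adj]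
    (hG : G.Connected) (hn : 2 ≤ Fintype.card V) {δ : ℕ}
    (hreg : ∀ v, (H v).IsRegularOfDegree δ) (hgirth : ∀ v, 5 ≤ (H v).girth) :
    ∀ u v : V ⊕ (Σ v, W v), u ≠ v → ∃ T : Finset (V ⊕ (Σ v, W v)),
      2 * δ ≤ T.card ∧ ∀ w ∈ T, (corona G H).dist u w ≠ (corona G H).dist v w := by
  classical
  have hW : ∀ k, 2 * δ ≤ Fintype.card (W k) := fun k =>
    two_delta_le_card (hgirth k) (hreg k)
  have mixed : ∀ (a : V) (b : Σ v, W v), ∃ T : Finset (V ⊕ (Σ v, W v)),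
      2 * δ ≤ T.card ∧
      ∀ w ∈ T, (corona G H).dist (inl a) w ≠ (corona G H).dist (inr b) w := by
    intro a b
    by_cases hba : b.1 = a
    · obtain ⟨k, hk⟩ := Fintype.exists_ne_of_one_lt_card (by omega) a
      refine ⟨Tcopy k, by rw [card_Tcopy]; exact hW k, ?_⟩
      intro w hw
      obtain ⟨z, rfl⟩ := mem_Tcopy.mp hw
      rw [corona_dist_inl_inr hG,
        corona_dist_inr_inr hG b ⟨k, z⟩ (by rw [hba]; exact hk.symm)]
      dsimp only
      rw [hba]
      omega
    · refine ⟨Tcopy a, by rw [card_Tcopy]; exact hW a, ?_⟩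
      intro w hw
      obtain ⟨z, rfl⟩ := mem_Tcopy.mp hw
      rw [corona_dist_inl_inr hG, corona_dist_inr_inr hG b ⟨a, z⟩ hba]
      dsimp only
      rw [SimpleGraph.dist_self]
      omega
  rintro (a | a) (b | b) huv
  · have hab : a ≠ b := by simpa using huv
    refine ⟨Tcopy a, by rw [card_Tcopy]; exact hW a, ?_⟩
    intro w hw
    obtain ⟨z, rfl⟩ := mem_Tcopy.mp hw
    rw [corona_dist_inl_inr hG, corona_dist_inl_inr hG]
    dsimp only
    rw [SimpleGraph.dist_self]
    have h2 : G.dist b a ≠ 0 := (hG.pos_dist_of_ne hab.symm).ne'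
    omega
  · exact mixed a b
  · obtain ⟨T, h1, h2⟩ := mixed b a
    exact ⟨T, h1, fun w hw => (h2 w hw).symm⟩
  · obtain ⟨i, x⟩ := a
    obtain ⟨j, y⟩ := b
    by_cases hab : i = j
    · subst hab
      have hxy : x ≠ y := by simpa using huv
      refine ⟨(symmDiff ((H i).neighborFinset x) ((H i).neighborFinset y)
          ∪ {x, y}).map ⟨fun z : W i => inr ⟨i, z⟩, fun a b h => by simpa using h⟩,
          ?_, ?_⟩
      · rw [Finset.card_map]
        exact card_core (hgirth i) (hreg i) hxy
      · intro w hw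
        rw [Finset.mem_map] at hw
        obtain ⟨z, hz, rfl⟩ := hw
        change (corona G H).dist (inr ⟨i, x⟩) (inr ⟨i, z⟩) ≠ (corona G H).dist (inr ⟨i, y⟩) (inr ⟨i, z⟩)
        rw [Finset.mem_union] at hz
        rcases hz with hz | hz
        · rw [Finset.mem_symmDiff] at hz
          rcases hz with ⟨hz1, hz2⟩ | ⟨hz1, hz2⟩
          · rw [mem_neighborFinset] at hz1
            rw [mem_neighborFinset] at hz2
            rw [corona_dist_inr_inr_adj hz1]
            intro h
            exact hz2 (corona_adj_inr_inr_same.mp (dist_eq_one_iff_adj.mp h.symm))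
          · rw [mem_neighborFinset] at hz1
            rw [mem_neighborFinset] at hz2
            rw [corona_dist_inr_inr_adj hz1]
            intro h
            exact hz2 (corona_adj_inr_inr_same.mp (dist_eq_one_iff_adj.mp h))
        · simp only [Finset.mem_insert, Finset.mem_singleton] at hz
          rcases hz with rfl | rfl
          · rw [SimpleGraph.dist_self]
            have : (inr ⟨i, y⟩ : V ⊕ (Σ v, W v)) ≠ inr ⟨i, z⟩ := by
              intro h
              exact hxy (by simpa using h.symm)
            exact ((corona_reachable (H := H) hG _ _).pos_dist_of_ne this).ne
          · rw [SimpleGraph.dist_self (G := corona G H) (v := inr ⟨i, z⟩)]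
            have : (inr ⟨i, x⟩ : V ⊕ (Σ v, W v)) ≠ inr ⟨i, z⟩ := by
              intro h
              exact hxy (by simpa using h)
            exact ((corona_reachable (H := H) hG _ _).pos_dist_of_ne this).ne'
    · refine ⟨Tcopy i, by rw [card_Tcopy]; exact hW i, ?_⟩
      intro w hw
      obtain ⟨z, rfl⟩ := mem_Tcopy.mp hw
      have hle := same_fiber_dist_le_two (H := H) hG x z
      have hpos : G.dist j i ≠ 0 := (hG.pos_dist_of_ne (fun h => hab h.symm)).ne'
      rw [corona_dist_inr_inr hG ⟨j, y⟩ ⟨i, z⟩ (fun h => hab (h.symm))]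
      dsimp only at *
      omega

end CoronaAux

/-- the corona of a connected graph of order ≥ 2 with a family of δ-regular
graphs of girth at least 5 is 2δ-metric dimensional. -/
theorem stmt_7 {V : Type*} [Fintype V] {W : V → Type*} [∀ v, Fintype (W v)]
    (G : SimpleGraph V) (hG : G.Connected) (hn : 2 ≤ Fintype.card V)
    (H : ∀ v, SimpleGraph (W v)) [∀ v, DecidableRel (H v).Adj] (δ : ℕ)
    (hreg : ∀ v, (H v).IsRegularOfDegree δ) (hgirth : ∀ v, 5 ≤ (H v).girth) :
    kMetricDimensional (corona G H) (2 * δ) := by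
  classical
  have hgen := corona_gen (G := G) (H := H) hG hn hreg hgirth
  constructor
  · refine ⟨Set.univ, ?_⟩
    intro u v huv
    obtain ⟨T, h1, h2⟩ := hgen u v huv
    exact ⟨T, by simp, h1, h2⟩
  · rintro k' ⟨S, hS⟩
    obtain ⟨a⟩ : Nonempty V := Fintype.card_pos_iff.mp (by omega)
    obtain ⟨x, y, hxy⟩ := edge_of_girth (hgirth a)
    have hne : (Sum.inr ⟨a, x⟩ : V ⊕ (Σ v, W v)) ≠ Sum.inr ⟨a, y⟩ := by
      simp [hxy.ne]
    obtain ⟨T, hTS, hTc, hTd⟩ := hS (Sum.inr ⟨a, x⟩) (Sum.inr ⟨a, y⟩) hne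
    let emb : W a ↪ (V ⊕ (Σ v, W v)) :=
      ⟨fun z => Sum.inr ⟨a, z⟩, fun p q h => by simpa using h⟩
    have hsub : T ⊆ ((H a).neighborFinset x ∪ (H a).neighborFinset y).map emb := by
      intro w hw
      have hd := hTd w hw
      rcases w with c | ⟨k, z⟩
      · exfalso
        apply hd
        rw [SimpleGraph.dist_comm (G := corona G H) (u := Sum.inr ⟨a, x⟩),
          SimpleGraph.dist_comm (G := corona G H) (u := Sum.inr ⟨a, y⟩),
          corona_dist_inl_inr hG, corona_dist_inl_inr hG]
      · by_cases hk : a = k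
        · subst hk
          have hzmem : z ∈ (H a).neighborFinset x ∪ (H a).neighborFinset y := by
            rw [Finset.mem_union]
            by_contra hz
            push_neg at hz
            obtain ⟨hz1, hz2⟩ := hz
            rw [mem_neighborFinset] at hz1 hz2
            have hzx : x ≠ z := fun h => hz2 (h ▸ hxy.symm)
            have hzy : y ≠ z := fun h => hz1 (h ▸ hxy)
            apply hd
            rw [corona_dist_inr_inr_nonadj hG hzx hz1,
              corona_dist_inr_inr_nonadj hG hzy hz2]
          exact Finset.mem_map_of_mem emb hzmem
        · exfalso
          apply hd
          rw [corona_dist_inr_inr hG ⟨a, x⟩ ⟨k, z⟩ hk,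
            corona_dist_inr_inr hG ⟨a, y⟩ ⟨k, z⟩ hk]
    have hcard : (((H a).neighborFinset x ∪ (H a).neighborFinset y).map
        emb).card = 2 * δ := by
      rw [Finset.card_map, Finset.card_union_of_disjoint (disj_nf (hgirth a) hxy),
        card_nf (hreg a), card_nf (hreg a)]
      ring
    calc k' ≤ T.card := hTc
      _ ≤ _ := Finset.card_le_card hsub
      _ = 2 * δ := hcard
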